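/- Let C₁ and C₂ be cycles of length at least k in G, with maximal good sets H(C₁) and H(C₂) containing them respectively. Then either H(C₁) = H(C₂) or H(C₁) ∩ H(C₂) = ∅; moreover, in the latter case there is at most one edge of G between H(C₁) and H(C₂). -/

import Mathlib

/-- `X ⊆ V(G)` is good (w.r.t. `k`) if every vertex of `X` lies on a cycle of length
at least `k/2` in `G[X]`, and any two distinct vertices of `X` are joined by a path
of length at least `k/2` in `G[X]`. -/
def Good {V : Type*} (G : SimpleGraph V) (k : ℕ) (X : Set V) : Prop :=
  (∀ u : X, ∃ c : (G.induce X).Walk u u, c.IsCycle ∧ k ≤ 2 * c.length) ∧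
  (∀ u v : X, u ≠ v → ∃ p : (G.induce X).Walk u v, p.IsPath ∧ k ≤ 2 * p.length)

namespace StmtSixAux

open SimpleGraph

def incl {V : Type*} (G : SimpleGraph V) {X Y : Set V} (h : X ⊆ Y) :
    G.induce X →g G.induce Y where
  toFun v := ⟨v.1, h v.2⟩
  map_rel' := fun ha => ha

lemma incl_inj {V : Type*} (G : SimpleGraph V) {X Y : Set V} (h : X ⊆ Y) :
    Function.Injective (incl G h) := by
  intro a b hab
  apply Subtype.ext
  have := congrArg Subtype.val hab
  exact this

lemma isPath_append {V : Type*} {G : SimpleGraph V} {u v w : V} {p : G.Walk u v} {q : G.Walk v w}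
    (hp : p.IsPath) (hq : q.IsPath)
    (h : ∀ x, x ∈ p.support → x ∈ q.support → x = v) : (p.append q).IsPath := by
  rw [Walk.isPath_def, Walk.support_append]
  have hqs := hq.support_nodup
  have htail : q.support = v :: q.support.tail := q.support_eq_cons
  rw [htail, List.nodup_cons] at hqs
  refine List.Nodup.append hp.support_nodup hqs.2 ?_
  intro x hx hx'
  have hxv := h x hx (List.mem_of_mem_tail hx')
  subst hxv
  exact hqs.1 hx'

lemma extract {W : Type*} {G' : SimpleGraph W} (P : W → Prop) :
    ∀ {v w : W} (q : G'.Walk v w), q.IsPath → ¬ P v → P w →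
    ∃ (x : W) (_ : P x) (q₁ : G'.Walk v x), q₁.IsPath ∧
      (∀ y ∈ q₁.support, y ∈ q.support) ∧ ∀ y ∈ q₁.support, y ≠ x → ¬ P y := by
  intro v w q
  induction q with
  | nil => intro _ hv hw; exact absurd hw hv
  | @cons v v₂ w h q' ih =>
    intro hq hv hw
    by_cases h₂ : P v₂
    · refine ⟨v₂, h₂, Walk.cons h Walk.nil, ?_, ?_, ?_⟩
      · simp [Walk.isPath_def, h.ne]
      · intro y hy; simp at hy; rcases hy with rfl | rfl
        · exact Walk.start_mem_support _
        · rw [Walk.support_cons]; exact List.mem_cons_of_mem _ (Walk.start_mem_support q')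
      · intro y hy hne; simp at hy; rcases hy with rfl | rfl
        · exact hv
        · exact absurd rfl hne
    · obtain ⟨x, hx, q₁, hq₁, hsub, hout⟩ := ih hq.of_cons h₂ hw
      have hvnot : v ∉ q₁.support := fun hmem =>
        ((Walk.cons_isPath_iff _ _).mp hq).2 (hsub v hmem)
      refine ⟨x, hx, Walk.cons h q₁, (Walk.cons_isPath_iff _ _).mpr ⟨hq₁, hvnot⟩, ?_, ?_⟩
      · intro y hy; rw [Walk.support_cons] at hy ⊢
        rcases List.mem_cons.mp hy with rfl | hy
        · exact List.mem_cons_self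
        · exact List.mem_cons_of_mem _ (hsub y hy)
      · intro y hy hne; rw [Walk.support_cons] at hy
        rcases List.mem_cons.mp hy with rfl | hy
        · exact hv
        · exact hout y hy hne

lemma mapped_path {V : Type*} {G : SimpleGraph V} {k : ℕ} {H U : Set V} (hHU : H ⊆ U)
    (hH : Good G k H) {u v : V} (hu : u ∈ H) (hv : v ∈ H) (hne : u ≠ v) :
    ∃ p : (G.induce U).Walk ⟨u, hHU hu⟩ ⟨v, hHU hv⟩, p.IsPath ∧ k ≤ 2 * p.length ∧
      ∀ y ∈ p.support, (y : U).1 ∈ H := by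
  obtain ⟨p, hp, hl⟩ := hH.2 ⟨u, hu⟩ ⟨v, hv⟩ (fun h => hne (congrArg Subtype.val h))
  refine ⟨p.map (incl G hHU), Walk.map_isPath_of_injective (incl_inj G hHU) hp,
    by have := Walk.length_map (f := incl G hHU) (p := p); exact hl.trans (le_of_eq (congrArg (2 * ·) this.symm)), ?_⟩
  intro y hy
  replace hy : y ∈ p.support.map (incl G hHU) :=
    Eq.mp (congrArg (y ∈ ·) (Walk.support_map (f := incl G hHU) (p := p))) hy
  rw [List.mem_map] at hy
  obtain ⟨z, _, rfl⟩ := hy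
  exact z.2

lemma mapped_cycle {V : Type*} {G : SimpleGraph V} {k : ℕ} {H U : Set V} (hHU : H ⊆ U)
    (hH : Good G k H) {u : V} (hu : u ∈ H) :
    ∃ c : (G.induce U).Walk ⟨u, hHU hu⟩ ⟨u, hHU hu⟩, c.IsCycle ∧ k ≤ 2 * c.length := by
  obtain ⟨c, hc, hl⟩ := hH.1 ⟨u, hu⟩
  exact ⟨c.map (incl G hHU),
    (Walk.map_isCycle_iff_of_injective (incl_inj G hHU)).mpr hc,
    by have := Walk.length_map (f := incl G hHU) (p := c); exact hl.trans (le_of_eq (congrArg (2 * ·) this.symm))⟩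

lemma split_path {V : Type*} {G : SimpleGraph V} {k : ℕ} {H₁ H₂ : Set V}
    (h1 : Good G k H₁) (h2 : Good G k H₂) {w : V} (hw1 : w ∈ H₁) (hw2 : w ∈ H₂)
    {u v : V} (hu : u ∈ H₁) (hu2 : u ∉ H₂) (hv : v ∈ H₂) (hv1 : v ∉ H₁) :
    ∃ p : (G.induce (H₁ ∪ H₂)).Walk ⟨u, Or.inl hu⟩ ⟨v, Or.inr hv⟩,
      p.IsPath ∧ k ≤ 2 * p.length := by
  have hvw : (⟨v, hv⟩ : H₂) ≠ ⟨w, hw2⟩ := by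
    intro h
    have : v = w := congrArg Subtype.val h
    exact hv1 (this ▸ hw1)
  obtain ⟨q, hq, _⟩ := h2.2 ⟨v, hv⟩ ⟨w, hw2⟩ hvw
  obtain ⟨x, hx, q₁, hq₁, _, hout⟩ := extract (fun z : H₂ => z.1 ∈ H₁) q hq hv1 hw1
  have hux : u ≠ x.1 := fun h => hu2 (h ▸ x.2)
  have hsub1 : H₁ ⊆ H₁ ∪ H₂ := Set.subset_union_left
  have hsub2 : H₂ ⊆ H₁ ∪ H₂ := Set.subset_union_right
  obtain ⟨p, hp, hlp, hps⟩ := mapped_path hsub1 h1 hu hx hux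
  set r := (q₁.map (incl G hsub2)).reverse with hr
  have hrpath : r.IsPath :=
    (Walk.map_isPath_of_injective (incl_inj G hsub2) hq₁).reverse
  have hrsup : ∀ y ∈ r.support, ∃ z ∈ q₁.support, (incl G hsub2) z = y := by
    intro y hy
    rw [Walk.support_reverse, List.mem_reverse, Walk.support_map, List.mem_map] at hy
    exact hy
  refine ⟨p.append r, isPath_append hp hrpath ?_, ?_⟩
  · intro y hyp hyr
    obtain ⟨z, hz, rfl⟩ := hrsup y hyr
    by_cases hzx : z = x
    · subst hzx; exact Subtype.ext rfl
    · exact absurd (hps _ hyp) (hout z hz hzx)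
  · have := Walk.length_append (p := p) (q := r)
    exact le_trans hlp (le_of_le_of_eq (Nat.mul_le_mul_left 2 (Nat.le_add_right _ _)) (congrArg (2 * ·) this.symm))

lemma good_union {V : Type*} {G : SimpleGraph V} {k : ℕ} {H₁ H₂ : Set V}
    (h1 : Good G k H₁) (h2 : Good G k H₂) {w : V} (hw1 : w ∈ H₁) (hw2 : w ∈ H₂) :
    Good G k (H₁ ∪ H₂) := by
  have hsub1 : H₁ ⊆ H₁ ∪ H₂ := Set.subset_union_left
  have hsub2 : H₂ ⊆ H₁ ∪ H₂ := Set.subset_union_right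
  constructor
  · rintro ⟨u, hu⟩
    rcases hu with hu1 | hu2
    · exact mapped_cycle hsub1 h1 hu1
    · exact mapped_cycle hsub2 h2 hu2
  · rintro ⟨u, hu⟩ ⟨v, hv⟩ huv
    have hne : u ≠ v := fun h => huv (Subtype.ext h)
    by_cases hu1 : u ∈ H₁ <;> by_cases hv1 : v ∈ H₁
    · obtain ⟨p, hp, hl, _⟩ := mapped_path hsub1 h1 hu1 hv1 hne
      exact ⟨p, hp, hl⟩
    · have hv2 : v ∈ H₂ := hv.resolve_left hv1
      by_cases hu2 : u ∈ H₂
      · obtain ⟨p, hp, hl, _⟩ := mapped_path hsub2 h2 hu2 hv2 hne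
        exact ⟨p, hp, hl⟩
      · obtain ⟨p, hp, hl⟩ := split_path h1 h2 hw1 hw2 hu1 hu2 hv2 hv1
        exact ⟨p, hp, hl⟩
    · have hu2 : u ∈ H₂ := hu.resolve_left hu1
      by_cases hv2 : v ∈ H₂
      · obtain ⟨p, hp, hl, _⟩ := mapped_path hsub2 h2 hu2 hv2 hne
        exact ⟨p, hp, hl⟩
      · obtain ⟨p, hp, hl⟩ := split_path h1 h2 hw1 hw2 hv1 hv2 hu2 hu1
        exact ⟨p.reverse, hp.reverse, by rwa [Walk.length_reverse]⟩
    · have hu2 : u ∈ H₂ := hu.resolve_left hu1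
      have hv2 : v ∈ H₂ := hv.resolve_left hv1
      obtain ⟨p, hp, hl, _⟩ := mapped_path hsub2 h2 hu2 hv2 hne
      exact ⟨p, hp, hl⟩

lemma bridge_path {V : Type*} {G : SimpleGraph V} {k : ℕ} {H₁ H₂ : Set V}
    (h1 : Good G k H₁) (h2 : Good G k H₂) (hdisj : ∀ z, z ∈ H₁ → z ∉ H₂)
    {a b : V} (ha : a ∈ H₁) (hb : b ∈ H₂) (hab : G.Adj a b)
    {u v : V} (hu : u ∈ H₁) (hv : v ∈ H₂) (hne : u ≠ a ∨ v ≠ b) :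
    ∃ p : (G.induce (H₁ ∪ H₂)).Walk ⟨u, Or.inl hu⟩ ⟨v, Or.inr hv⟩,
      p.IsPath ∧ k ≤ 2 * p.length := by
  have hsub1 : H₁ ⊆ H₁ ∪ H₂ := Set.subset_union_left
  have hsub2 : H₂ ⊆ H₁ ∪ H₂ := Set.subset_union_right
  have hab' : (G.induce (H₁ ∪ H₂)).Adj ⟨a, Or.inl ha⟩ ⟨b, Or.inr hb⟩ := hab
  by_cases hua : u = a
  · subst hua
    have hvb : v ≠ b := hne.resolve_left (fun h => h rfl)
    obtain ⟨q, hq, hlq, hqs⟩ := mapped_path hsub2 h2 hb hv (fun h => hvb h.symm)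
    have hab'' : (G.induce (H₁ ∪ H₂)).Adj ⟨u, Or.inl hu⟩ ⟨b, hsub2 hb⟩ := hab
    refine ⟨Walk.cons hab'' q, ?_, ?_⟩
    · rw [Walk.cons_isPath_iff]
      exact ⟨hq, fun hmem => hdisj u hu (hqs _ hmem)⟩
    · rw [Walk.length_cons]; omega
  · obtain ⟨p, hp, hlp, hps⟩ := mapped_path hsub1 h1 hu ha hua
    by_cases hbv : b = v
    · subst hbv
      have hab'' : (G.induce (H₁ ∪ H₂)).Adj ⟨a, hsub1 ha⟩ ⟨b, Or.inr hv⟩ := hab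
      refine ⟨p.append (Walk.cons hab'' Walk.nil), ?_, ?_⟩
      · refine isPath_append hp ?_ ?_
        · rw [Walk.cons_isPath_iff]
          refine ⟨Walk.IsPath.nil, ?_⟩
          intro hmem
          rw [Walk.support_nil, List.mem_singleton] at hmem
          exact hab.ne (congrArg Subtype.val hmem)
        · intro x hxp hxc
          rw [Walk.support_cons, Walk.support_nil] at hxc
          rcases List.mem_cons.mp hxc with hxe | hxc
          · exact hxe
          · rw [List.mem_singleton] at hxc
            rw [hxc] at hxp
            exact absurd (hps _ hxp) (fun hbh1 => hdisj b hbh1 hv)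
      · rw [Walk.length_append]; omega
    · obtain ⟨q, hq, hlq, hqs⟩ := mapped_path hsub2 h2 hb hv hbv
      have hab'' : (G.induce (H₁ ∪ H₂)).Adj ⟨a, hsub1 ha⟩ ⟨b, hsub2 hb⟩ := hab
      refine ⟨p.append (Walk.cons hab'' q), ?_, ?_⟩
      · refine isPath_append hp ?_ ?_
        · rw [Walk.cons_isPath_iff]
          exact ⟨hq, fun hmem => hdisj a ha (hqs _ hmem)⟩
        · intro x hxp hxc
          rw [Walk.support_cons] at hxc
          rcases List.mem_cons.mp hxc with hxe | hxc
          · exact hxe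
          · exact absurd (hps _ hxp) (fun hh => hdisj _ hh (hqs _ hxc))
      · rw [Walk.length_append]; omega

lemma good_union_bridge {V : Type*} {G : SimpleGraph V} {k : ℕ} {H₁ H₂ : Set V}
    (h1 : Good G k H₁) (h2 : Good G k H₂) (hdisj : ∀ z, z ∈ H₁ → z ∉ H₂)
    {a b c d : V} (ha : a ∈ H₁) (hb : b ∈ H₂) (hab : G.Adj a b)
    (hc : c ∈ H₁) (hd2 : d ∈ H₂) (hcd : G.Adj c d)
    (hedne : a ≠ c ∨ b ≠ d) : Good G k (H₁ ∪ H₂) := by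
  have hsub1 : H₁ ⊆ H₁ ∪ H₂ := Set.subset_union_left
  have hsub2 : H₂ ⊆ H₁ ∪ H₂ := Set.subset_union_right
  have key : ∀ (u v : V) (hu : u ∈ H₁) (hv : v ∈ H₂),
      ∃ p : (G.induce (H₁ ∪ H₂)).Walk ⟨u, Or.inl hu⟩ ⟨v, Or.inr hv⟩,
        p.IsPath ∧ k ≤ 2 * p.length := by
    intro u v hu hv
    by_cases h : u = a ∧ v = b
    · obtain ⟨rfl, rfl⟩ := h
      rcases hedne with hne | hne
      · exact bridge_path h1 h2 hdisj hc hd2 hcd hu hv (Or.inl hne)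
      · exact bridge_path h1 h2 hdisj hc hd2 hcd hu hv (Or.inr hne)
    · rw [not_and_or] at h
      exact bridge_path h1 h2 hdisj ha hb hab hu hv h
  constructor
  · rintro ⟨u, hu⟩
    rcases hu with hu1 | hu2
    · exact mapped_cycle hsub1 h1 hu1
    · exact mapped_cycle hsub2 h2 hu2
  · rintro ⟨u, hu⟩ ⟨v, hv⟩ huv
    have hne : u ≠ v := fun h => huv (Subtype.ext h)
    rcases hu with hu1 | hu2 <;> rcases hv with hv1 | hv2
    · obtain ⟨p, hp, hl, _⟩ := mapped_path hsub1 h1 hu1 hv1 hne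
      exact ⟨p, hp, hl⟩
    · obtain ⟨p, hp, hl⟩ := key u v hu1 hv2
      exact ⟨p, hp, hl⟩
    · obtain ⟨p, hp, hl⟩ := key v u hv1 hu2
      exact ⟨p.reverse, hp.reverse, by rwa [Walk.length_reverse]⟩
    · obtain ⟨p, hp, hl, _⟩ := mapped_path hsub2 h2 hu2 hv2 hne
      exact ⟨p, hp, hl⟩

end StmtSixAux

open StmtSixAux in
/-- For two cycles `C₁, C₂` of length at least `k` with maximal good sets `H₁, H₂`
containing them, either `H₁ = H₂` or they are disjoint, and in the latter case there
is at most one edge of `G` between `H₁` and `H₂`. -/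
theorem stmt_6 {V : Type*} [Fintype V] (G : SimpleGraph V) (k : ℕ)
    (u₁ u₂ : V) (c₁ : G.Walk u₁ u₁) (c₂ : G.Walk u₂ u₂)
    (hc₁ : c₁.IsCycle) (hk₁ : k ≤ c₁.length)
    (hc₂ : c₂.IsCycle) (hk₂ : k ≤ c₂.length)
    (H₁ H₂ : Set V) (hH₁ : Good G k H₁) (hH₂ : Good G k H₂)
    (hC₁ : {v | v ∈ c₁.support} ⊆ H₁) (hC₂ : {v | v ∈ c₂.support} ⊆ H₂)
    (hmax₁ : ∀ H' : Set V, Good G k H' → H₁ ⊆ H' → H' = H₁)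
    (hmax₂ : ∀ H' : Set V, Good G k H' → H₂ ⊆ H' → H' = H₂) :
    H₁ = H₂ ∨ (H₁ ∩ H₂ = ∅ ∧
      {e : V × V | e.1 ∈ H₁ ∧ e.2 ∈ H₂ ∧ G.Adj e.1 e.2}.ncard ≤ 1) := by
  by_cases hint : H₁ ∩ H₂ = ∅
  · right
    refine ⟨hint, ?_⟩
    by_contra hcard
    push_neg at hcard
    have hfin : ({e : V × V | e.1 ∈ H₁ ∧ e.2 ∈ H₂ ∧ G.Adj e.1 e.2}).Finite :=
      Set.toFinite _
    rw [Set.one_lt_ncard hfin] at hcard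
    obtain ⟨e, he, f, hf, hef⟩ := hcard
    obtain ⟨ha, hb, hab⟩ := he
    obtain ⟨hc, hd2, hcd⟩ := hf
    have hdisj : ∀ z, z ∈ H₁ → z ∉ H₂ := by
      intro z h1z h2z
      have : z ∈ H₁ ∩ H₂ := ⟨h1z, h2z⟩
      rw [hint] at this
      exact this
    have hedne : e.1 ≠ f.1 ∨ e.2 ≠ f.2 := by
      by_contra hcon
      push_neg at hcon
      exact hef (Prod.ext hcon.1 hcon.2)
    have hgood := good_union_bridge hH₁ hH₂ hdisj ha hb hab hc hd2 hcd hedne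
    have heq := hmax₁ _ hgood Set.subset_union_left
    have hbH1 : e.2 ∈ H₁ := by
      rw [← heq]
      exact Or.inr hb
    exact hdisj e.2 hbH1 hb
  · left
    obtain ⟨w, hw⟩ := Set.nonempty_iff_ne_empty.mpr hint
    have hg := good_union hH₁ hH₂ hw.1 hw.2
    have e1 := hmax₁ _ hg Set.subset_union_left
    have e2 := hmax₂ _ hg Set.subset_union_right
    exact e1.symm.trans e2
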